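/- Let P ∈ ℂ^{n×n} be Hermitian positive definite and A_F ∈ ℂ^{n×n} satisfy P⁻¹A_Fᴴ + A_F P⁻¹ = 0. Then, with T := P^{1/2} the Hermitian positive definite square root of P, the matrix T A_F T⁻¹ is skew-Hermitian; consequently every eigenvalue of A_F is purely imaginary (lies on the imaginary axis). -/

import Mathlib

open Matrix
open scoped ComplexOrder

namespace Matrix.PosSemidef

noncomputable def sqrt {n : Type*} [Fintype n] [DecidableEq n] {𝕜 : Type*} [RCLike 𝕜]
    {A : Matrix n n 𝕜} (hA : PosSemidef A) : Matrix n n 𝕜 :=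
  hA.1.eigenvectorUnitary.1 * diagonal ((↑) ∘ (√·) ∘ hA.1.eigenvalues) *
  (star hA.1.eigenvectorUnitary : Matrix n n 𝕜)

end Matrix.PosSemidef

theorem sqrtAux_herm {n : Type*} [Fintype n] [DecidableEq n] {𝕜 : Type*} [RCLike 𝕜]
    {A : Matrix n n 𝕜} (hA : PosSemidef A) : (hA.sqrt)ᴴ = hA.sqrt := by
  simp [Matrix.PosSemidef.sqrt, conjTranspose_mul, mul_assoc, diagonal_conjTranspose]
  have hd : star (RCLike.ofReal ∘ (fun x => √x) ∘ hA.1.eigenvalues : n → 𝕜) =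
      RCLike.ofReal ∘ (fun x => √x) ∘ hA.1.eigenvalues :=
    funext fun i => RCLike.conj_ofReal (K := 𝕜) _
  rw [hd]
  congr 1
  exact conjTranspose_conjTranspose _

theorem sqrtAux_mul_self {n : Type*} [Fintype n] [DecidableEq n] {𝕜 : Type*} [RCLike 𝕜]
    {A : Matrix n n 𝕜} (hA : PosSemidef A) : hA.sqrt * hA.sqrt = A := by
  have hU : (star hA.1.eigenvectorUnitary : Matrix n n 𝕜) * hA.1.eigenvectorUnitary.1 = 1 := by
    simp
  conv_rhs => rw [hA.1.spectral_theorem, Unitary.conjStarAlgAut_apply]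
  simp only [Matrix.PosSemidef.sqrt]
  rw [show ∀ a b c d e f : Matrix n n 𝕜, a * b * c * (d * e * f) = a * (b * (c * d) * e) * f by
    intros; simp only [mul_assoc], hU, mul_one, diagonal_mul_diagonal]
  congr 3
  ext i
  simp only [Function.comp_apply]
  rw [← RCLike.ofReal_mul, Real.mul_self_sqrt (hA.eigenvalues_nonneg i)]


/-- if `P ≻ 0` and `P⁻¹A_Fᴴ + A_F P⁻¹ = 0`, then with `T := P^{1/2}`
the matrix `T A_F T⁻¹` is skew-Hermitian, and every eigenvalue of `A_F` is
purely imaginary. -/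
theorem skewHermitian_of_central_equation {n : ℕ}
    (P AF : Matrix (Fin n) (Fin n) ℂ) (hP : P.PosDef)
    (h : P⁻¹ * AFᴴ + AF * P⁻¹ = 0) :
    (hP.posSemidef.sqrt * AF * (hP.posSemidef.sqrt)⁻¹)ᴴ =
        -(hP.posSemidef.sqrt * AF * (hP.posSemidef.sqrt)⁻¹) ∧
    ∀ μ ∈ spectrum ℂ AF, μ.re = 0 := by
  set T := hP.posSemidef.sqrt with hTdef
  have hTT : T * T = P := sqrtAux_mul_self hP.posSemidef
  have hTH : Tᴴ = T := sqrtAux_herm hP.posSemidef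
  have hPunit : IsUnit P.det := (Matrix.isUnit_iff_isUnit_det P).mp hP.isUnit
  have hPP : P * P⁻¹ = 1 := Matrix.mul_nonsing_inv P hPunit
  have hPP' : P⁻¹ * P = 1 := Matrix.nonsing_inv_mul P hPunit
  -- key algebraic identity: AFᴴ = -(P * AF * P⁻¹)
  have hAFH : AFᴴ = -(P * (AF * P⁻¹)) := by
    have h1 : P⁻¹ * AFᴴ = -(AF * P⁻¹) := by
      rw [eq_neg_iff_add_eq_zero]; exact h
    calc AFᴴ = P * (P⁻¹ * AFᴴ) := by rw [← mul_assoc, hPP, one_mul]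
    _ = -(P * (AF * P⁻¹)) := by rw [h1, mul_neg]
  constructor
  · have hTP : T * P = P * T := by rw [← hTT, mul_assoc]
    have hTinv : T⁻¹ = P⁻¹ * T := by
      apply Matrix.inv_eq_left_inv
      rw [mul_assoc, hTT, hPP']
    have h3 : P⁻¹ * T * P = T := by
      rw [mul_assoc, hTP, ← mul_assoc, hPP', one_mul]
    calc (T * AF * T⁻¹)ᴴ = T⁻¹ᴴ * (AFᴴ * Tᴴ) := by
          rw [conjTranspose_mul, conjTranspose_mul]
      _ = T⁻¹ * (AFᴴ * T) := by rw [Matrix.conjTranspose_nonsing_inv, hTH]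
      _ = -(T * AF * T⁻¹) := by
          rw [hAFH, neg_mul, mul_neg, hTinv]
          simp only [← mul_assoc]
          rw [h3]
  · intro μ hμ
    rw [← AlgEquiv.spectrum_eq (Matrix.toLinAlgEquiv' (R := ℂ) (n := Fin n)),
      ← Module.End.hasEigenvalue_iff_mem_spectrum] at hμ
    obtain ⟨v, hv⟩ := hμ.exists_hasEigenvector
    have hv0 : v ≠ 0 := hv.right
    have hvAF : AF *ᵥ v = μ • v := by
      simpa [Matrix.toLinAlgEquiv'_apply] using hv.apply_eq_smul
    have hq : 0 < star v ⬝ᵥ (P *ᵥ v) := hP.dotProduct_mulVec_pos hv0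
    set q : ℂ := star v ⬝ᵥ (P *ᵥ v) with hqdef
    have hq0 : q ≠ 0 := ne_of_gt hq
    -- compute star v ⬝ᵥ (AFᴴ *ᵥ (P *ᵥ v)) two ways
    have key : (starRingEnd ℂ) μ * q = -(μ * q) := by
      have lhs : star v ⬝ᵥ (AFᴴ *ᵥ (P *ᵥ v)) = (starRingEnd ℂ) μ * q := by
        rw [Matrix.dotProduct_mulVec, ← Matrix.star_mulVec, hvAF, star_smul,
          smul_dotProduct]
        simp [hqdef, Matrix.dotProduct_mulVec, smul_eq_mul]
      have h4 : (P * (AF * P⁻¹)) * P = P * AF := by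
        rw [mul_assoc, mul_assoc, hPP', mul_one]
      have rhs : star v ⬝ᵥ (AFᴴ *ᵥ (P *ᵥ v)) = -(μ * q) := by
        rw [hAFH, Matrix.neg_mulVec, dotProduct_neg, Matrix.mulVec_mulVec, h4,
          ← Matrix.mulVec_mulVec, hvAF, Matrix.mulVec_smul, dotProduct_smul]
        simp [hqdef, smul_eq_mul]
      rw [← lhs, rhs]
    have key2 : (starRingEnd ℂ) μ * q = (-μ) * q := by rw [key, neg_mul]
    have hμμ : (starRingEnd ℂ) μ = -μ := mul_right_cancel₀ hq0 key2
    have hre : μ.re = -μ.re := by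
      have := congrArg Complex.re hμμ
      simpa using this
    linarith
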